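/- Let G be a finite group and let H ≤ G be a subgroup of minimal cardinality among all subgroups K of G for which the abelianization K/K' has maximal order among all abelian sections of G. Then H is nilpotent. -/

import Mathlib

open Subgroup Pointwise

/-- Key lemma: under the hypotheses, any subgroup `M` of `H` which together with the
commutator subgroup generates `H` must be all of `H`. -/
private lemma key_lemma {G : Type*} [Group G] [Fintype G]
    (H : Subgroup G)
    (hmax : ∀ (A : Subgroup G) (B : Subgroup A), B.Normal → commutator ↥A ≤ B →
      Nat.card (↥A ⧸ B) ≤ Nat.card (Abelianization ↥H))
    (hmin : ∀ K : Subgroup G,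
      (∀ (A : Subgroup G) (B : Subgroup A), B.Normal → commutator ↥A ≤ B →
        Nat.card (↥A ⧸ B) ≤ Nat.card (Abelianization ↥K)) →
      Nat.card H ≤ Nat.card K)
    (M : Subgroup ↥H) (hM : M ⊔ commutator ↥H = ⊤) : M = ⊤ := by
  -- the map `M → Abelianization H` is surjective
  have hofsurj : Function.Surjective (Abelianization.of : ↥H → Abelianization ↥H) :=
    fun x => QuotientGroup.induction_on x fun g => ⟨g, rfl⟩
  have hsurj : Function.Surjective
      ((Abelianization.of).comp M.subtype : ↥M →* Abelianization ↥H) := by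
    intro x
    obtain ⟨h, rfl⟩ := hofsurj x
    have hh : h ∈ ((M : Set ↥H) * (commutator ↥H : Set ↥H)) := by
      rw [← Subgroup.mul_normal M (commutator ↥H), hM]; trivial
    obtain ⟨m, hm, c, hc, rfl⟩ := hh
    refine ⟨⟨m, hm⟩, ?_⟩
    have hc1 : Abelianization.of c = (1 : Abelianization ↥H) := by
      have := Abelianization.commutator_subset_ker
        (Abelianization.of : ↥H →* Abelianization ↥H) hc
      exact MonoidHom.mem_ker.mp this
    simp [hc1]
  -- hence `Abelianization M` surjects onto `Abelianization H`
  have hsurj' : Function.Surjective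
      (Abelianization.lift ((Abelianization.of).comp M.subtype)) := by
    intro x
    obtain ⟨m, hm⟩ := hsurj x
    exact ⟨Abelianization.of m, by simpa using hm⟩
  have hcard1 : Nat.card (Abelianization ↥H) ≤ Nat.card (Abelianization ↥M) :=
    Nat.card_le_card_of_surjective _ hsurj'
  -- transfer to the image of `M` in `G`
  set K : Subgroup G := M.map H.subtype with hK
  have e : ↥M ≃* ↥K := Subgroup.equivMapOfInjective M H.subtype H.subtype_injective
  have hcard2 : Nat.card (Abelianization ↥M) = Nat.card (Abelianization ↥K) :=
    Nat.card_congr e.abelianizationCongr.toEquiv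
  have hcard3 : Nat.card (Abelianization ↥H) ≤ Nat.card (Abelianization ↥K) :=
    hcard1.trans hcard2.le
  have hKmax : ∀ (A : Subgroup G) (B : Subgroup A), B.Normal → commutator ↥A ≤ B →
      Nat.card (↥A ⧸ B) ≤ Nat.card (Abelianization ↥K) :=
    fun A B hB hBc => (hmax A B hB hBc).trans hcard3
  have hHK : Nat.card H ≤ Nat.card K := hmin K hKmax
  have hKM : Nat.card K = Nat.card M := (Nat.card_congr e.toEquiv).symm
  have : Nat.card ↥H ≤ Nat.card M := by
    rw [← hKM]; exact hHK
  exact Subgroup.eq_top_of_le_card M this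

theorem nilpotent_of_minimal_maximal_abelianization {G : Type*} [Group G] [Fintype G]
    (H : Subgroup G)
    (hmax : ∀ (A : Subgroup G) (B : Subgroup A), B.Normal → commutator ↥A ≤ B →
      Nat.card (↥A ⧸ B) ≤ Nat.card (Abelianization ↥H))
    (hmin : ∀ K : Subgroup G,
      (∀ (A : Subgroup G) (B : Subgroup A), B.Normal → commutator ↥A ≤ B →
        Nat.card (↥A ⧸ B) ≤ Nat.card (Abelianization ↥K)) →
      Nat.card H ≤ Nat.card K) :
    Group.IsNilpotent ↥H := by
  have q := (isNilpotent_of_finite_tfae (G := ↥H)).out 0 3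
  rw [q]; clear q
  intro p hp P
  -- `N := commutator H ⊔ P` is normal in `H` since it contains the commutator subgroup
  set C : Subgroup ↥H := commutator ↥H with hC
  set N : Subgroup ↥H := C ⊔ (P : Subgroup ↥H) with hN
  have hNnormal : N.Normal := by
    constructor
    intro n hn g
    have hcomm : g * n * g⁻¹ * n⁻¹ ∈ C := by
      open scoped commutatorElement in
      have : ⁅g, n⁆ ∈ ⁅(⊤ : Subgroup ↥H), (⊤ : Subgroup ↥H)⁆ :=
        Subgroup.commutator_mem_commutator (mem_top g) (mem_top n)
      simpa [commutatorElement_def, mul_assoc, hC, commutator_def] using this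
    have : (g * n * g⁻¹ * n⁻¹) * n ∈ N :=
      N.mul_mem (le_sup_left (a := C) (b := (P : Subgroup ↥H)) hcomm) hn
    simpa [mul_assoc] using this
  have hPN : (P : Subgroup ↥H) ≤ N := le_sup_right
  have hfrattini := Sylow.normalizer_sup_eq_top' (N := N) P hPN
  -- reduce: normalizer ⊔ C = ⊤
  have htop : Subgroup.normalizer ((P : Subgroup ↥H) : Set ↥H) ⊔ C = ⊤ := by
    have h1 : Subgroup.normalizer ((P : Subgroup ↥H) : Set ↥H) ⊔ N
        = Subgroup.normalizer ((P : Subgroup ↥H) : Set ↥H) ⊔ C := by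
      rw [hN, sup_comm C, ← sup_assoc, sup_of_le_left Subgroup.le_normalizer]
    rw [← h1]; exact hfrattini
  have := key_lemma H hmax hmin (Subgroup.normalizer ((P : Subgroup ↥H) : Set ↥H)) htop
  exact Subgroup.normalizer_eq_top_iff.mp this
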